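/- Let N ≥ 1, let K ⊆ Fin N with |K| = k, and let O be the Pauli string with O_j ∈ {X,Y,Z} for each j ∈ K and O_j = I₂ for j ∉ K (a k-local Pauli observable). Then for every complex matrix ρ indexed by (Fin N → Fin 2), (1/3^N) · Σ_{P : Fin N → {X,Y,Z}} Σ_{b : Fin N → {0,1}} w_ρ(P,b) · (Tr(S(P,b) · (⊗_j O_j)))² = 3^k · Tr(ρ). In particular, for a trace-one state ρ the second moment of the single-snapshot classical-shadow estimator of a k-local Pauli observable equals exactly 3^k (the squared shadow norm of a k-local Pauli observable under random Pauli measurements). -/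

import Mathlib

open Matrix BigOperators

noncomputable section

/-- The Pauli matrices, indexed by `0 ↦ X`, `1 ↦ Y`, `2 ↦ Z`. -/
def pauli : Fin 3 → Matrix (Fin 2) (Fin 2) ℂ
  | 0 => !![0, 1; 1, 0]
  | 1 => !![0, -Complex.I; Complex.I, 0]
  | 2 => !![1, 0; 0, -1]

/-- The eigenvectors `e(P,s)` of the Pauli matrices, with the index `0 ↦ X`, `1 ↦ Y`, `2 ↦ Z`. -/
def evec : Fin 3 → Fin 2 → Fin 2 → ℂ
  | 0, s => fun a => (1 / (Real.sqrt 2 : ℂ)) * (if a = 1 then (-1 : ℂ) ^ (s : ℕ) else 1)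
  | 1, s => fun a => (1 / (Real.sqrt 2 : ℂ)) * (if a = 1 then (-1 : ℂ) ^ (s : ℕ) * Complex.I else 1)
  | 2, s => fun a => if a = s then 1 else 0

/-- The outer product `|v⟩⟨v|`, with entries `v a * conj (v b)`. -/
def outer {n : Type*} (v : n → ℂ) : Matrix n n ℂ :=
  Matrix.of fun a b => v a * (starRingEnd ℂ) (v b)

/-- The tensor product `⊗_j A_j` of 2×2 matrices, as a matrix indexed by `Fin N → Fin 2`. -/
def tensorProd {N : ℕ} (A : Fin N → Matrix (Fin 2) (Fin 2) ℂ) :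
    Matrix (Fin N → Fin 2) (Fin N → Fin 2) ℂ :=
  Matrix.of fun x y => ∏ j, A j (x j) (y j)

/-- The product basis vector `e(P,b)` with entries `∏_j e(P_j,b_j)(x_j)`. -/
def pvec {N : ℕ} (P : Fin N → Fin 3) (b : Fin N → Fin 2) : (Fin N → Fin 2) → ℂ :=
  fun x => ∏ j, evec (P j) (b j) (x j)

/-- The Born-rule outcome weight `w_ρ(P,b) = ⟨e(P,b)|ρ|e(P,b)⟩`. -/
def wgt {N : ℕ} (ρ : Matrix (Fin N → Fin 2) (Fin N → Fin 2) ℂ)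
    (P : Fin N → Fin 3) (b : Fin N → Fin 2) : ℂ :=
  ∑ x, ∑ y, (starRingEnd ℂ) (pvec P b x) * ρ x y * pvec P b y

/-- The inverse snapshot `S(P,b) = ⊗_j (3·|e(P_j,b_j)⟩⟨e(P_j,b_j)| − I₂)`. -/
def snapshot {N : ℕ} (P : Fin N → Fin 3) (b : Fin N → Fin 2) :
    Matrix (Fin N → Fin 2) (Fin N → Fin 2) ℂ :=
  tensorProd (fun j => (3 : ℂ) • outer (evec (P j) (b j)) - 1)

set_option maxHeartbeats 1000000
set_option linter.unusedVariables false
set_option linter.unreachableTactic false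
set_option linter.unusedTactic false

set_option maxHeartbeats 1000000

set_option linter.unusedVariables false
set_option linter.unreachableTactic false
set_option linter.unusedTactic false

lemma evec0 (s a : Fin 2) : evec 0 s a = (1 / (Real.sqrt 2 : ℂ)) * (if a = 1 then (-1 : ℂ) ^ (s : ℕ) else 1) := rfl
lemma evec1 (s a : Fin 2) : evec 1 s a = (1 / (Real.sqrt 2 : ℂ)) * (if a = 1 then (-1 : ℂ) ^ (s : ℕ) * Complex.I else 1) := rfl
lemma evec2 (s a : Fin 2) : evec 2 s a = if a = s then 1 else 0 := rfl
lemma pauli0 : pauli 0 = !![0, 1; 1, 0] := rfl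
lemma pauli1 : pauli 1 = !![0, -Complex.I; Complex.I, 0] := rfl
lemma pauli2 : pauli 2 = !![1, 0; 0, -1] := rfl

lemma sqrt2sq : ((Real.sqrt 2 : ℝ) : ℂ) * ((Real.sqrt 2 : ℝ) : ℂ) = 2 := by
  norm_cast
  rw [Real.mul_self_sqrt (by norm_num)]

lemma sqrt2ne : ((Real.sqrt 2 : ℝ) : ℂ) ≠ 0 := by
  simp [Real.sqrt_ne_zero']

-- completeness per basis
lemma evec_complete (p : Fin 3) (a b : Fin 2) :
    ∑ s : Fin 2, (starRingEnd ℂ) (evec p s a) * evec p s b = if a = b then 1 else 0 := by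
  have h2 := sqrt2sq
  have hne := sqrt2ne
  fin_cases p <;> fin_cases a <;> fin_cases b <;>
    simp [Fin.sum_univ_two, evec0, evec1, evec2, _root_.map_mul, map_div₀, Complex.conj_ofReal,
      Complex.conj_I] <;>
    field_simp <;> first | ring1 | linear_combination -h2 | linear_combination -2 * Complex.I_sq | linear_combination -h2 - 2 * Complex.I_sq

lemma sqrt2pow2 : ((Real.sqrt 2 : ℝ) : ℂ) ^ 2 = 2 := by
  rw [pow_two]; exact sqrt2sq

lemma sqrt2pow4 : ((Real.sqrt 2 : ℝ) : ℂ) ^ 4 = 4 := by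
  have : ((Real.sqrt 2 : ℝ) : ℂ) ^ 4 = (((Real.sqrt 2 : ℝ) : ℂ) ^ 2) ^ 2 := by ring
  rw [this, sqrt2pow2]; norm_num

lemma trace_snap_pauli (p q : Fin 3) (s : Fin 2) :
    (((3:ℂ) • outer (evec p s) - 1) * pauli q).trace = if p = q then 3 * (-1:ℂ)^(s:ℕ) else 0 := by
  have hne := sqrt2ne
  fin_cases p <;> fin_cases q <;> fin_cases s
  all_goals try simp [Matrix.trace_fin_two, Matrix.mul_apply, Fin.sum_univ_two, Matrix.sub_apply,
      Matrix.smul_apply, Matrix.one_apply, outer, evec0, evec1, evec2, pauli0, pauli1, pauli2,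
      _root_.map_mul, map_div₀, Complex.conj_ofReal, Complex.conj_I]
  all_goals try field_simp
  all_goals try ring_nf
  all_goals try simp [Complex.I_sq, sqrt2pow2, sqrt2pow4]
  all_goals try ring_nf
  all_goals try norm_num

lemma trace_snap_one (p : Fin 3) (s : Fin 2) :
    (((3:ℂ) • outer (evec p s) - 1) * 1).trace = 1 := by
  have hne := sqrt2ne
  fin_cases p <;> fin_cases s
  all_goals try simp [Matrix.trace_fin_two, Matrix.mul_apply, Fin.sum_univ_two, Matrix.sub_apply,
      Matrix.smul_apply, Matrix.one_apply, outer, evec0, evec1, evec2,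
      _root_.map_mul, map_div₀, Complex.conj_ofReal, Complex.conj_I]
  all_goals try field_simp
  all_goals try ring_nf
  all_goals try simp [Complex.I_sq, sqrt2pow2, sqrt2pow4]
  all_goals try ring_nf
  all_goals try norm_num

lemma trace_tensor_mul {N : ℕ} (A B : Fin N → Matrix (Fin 2) (Fin 2) ℂ) :
    (tensorProd A * tensorProd B).trace = ∏ j, (A j * B j).trace := by
  have h1 : ∀ j, (A j * B j).trace = ∑ z : Fin 2 × Fin 2, A j z.1 z.2 * B j z.2 z.1 := by
    intro j
    simp [Matrix.trace, Matrix.diag, Matrix.mul_apply, Fintype.sum_prod_type]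
  have h2 : (tensorProd A * tensorProd B).trace
      = ∑ x : Fin N → Fin 2, ∑ y : Fin N → Fin 2, ∏ j, (A j (x j) (y j) * B j (y j) (x j)) := by
    simp [Matrix.trace, Matrix.diag, Matrix.mul_apply, tensorProd, Finset.prod_mul_distrib]
  have h3 : ∑ x : Fin N → Fin 2, ∑ y : Fin N → Fin 2, ∏ j, (A j (x j) (y j) * B j (y j) (x j))
      = ∑ p : (Fin N → Fin 2) × (Fin N → Fin 2), ∏ j, (A j (p.1 j) (p.2 j) * B j (p.2 j) (p.1 j)) :=
    (Fintype.sum_prod_type (f := fun p : (Fin N → Fin 2) × (Fin N → Fin 2) => ∏ j, (A j (p.1 j) (p.2 j) * B j (p.2 j) (p.1 j)))).symm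
  rw [h2]
  simp_rw [h1]
  rw [Fintype.prod_sum, h3]
  exact Fintype.sum_equiv (Equiv.arrowProdEquivProdArrow (Fin N) (fun _ => Fin 2) (fun _ => Fin 2)).symm
    _ _ (fun p => rfl)

lemma qsum_pauli (q : Fin 3) (a b : Fin 2) :
    ∑ p : Fin 3, ∑ s : Fin 2, (starRingEnd ℂ) (evec p s a) * evec p s b *
      (((3:ℂ) • outer (evec p s) - 1) * pauli q).trace ^ 2 = if a = b then 9 else 0 := by
  simp_rw [trace_snap_pauli]
  have h1 : ∀ (p : Fin 3) (s : Fin 2), (if p = q then 3 * (-1:ℂ)^(s:ℕ) else 0)^2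
      = if p = q then 9 else 0 := by
    intro p s
    split
    · fin_cases s <;> norm_num
    · norm_num
  simp_rw [h1, mul_ite, mul_zero]
  rw [Finset.sum_comm]
  simp only [Finset.sum_ite_eq', Finset.mem_univ, if_true]
  rw [← Finset.sum_mul, evec_complete]
  split <;> norm_num

lemma qsum_one (a b : Fin 2) :
    ∑ p : Fin 3, ∑ s : Fin 2, (starRingEnd ℂ) (evec p s a) * evec p s b *
      (((3:ℂ) • outer (evec p s) - 1) * 1).trace ^ 2 = if a = b then 3 else 0 := by
  simp_rw [trace_snap_one, one_pow, mul_one, evec_complete]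
  split <;> simp

lemma key {N : ℕ} (K : Finset (Fin N)) (k : ℕ) (hk : K.card = k)
    (O : Fin N → Matrix (Fin 2) (Fin 2) ℂ)
    (hO : ∀ j ∈ K, O j = pauli 0 ∨ O j = pauli 1 ∨ O j = pauli 2)
    (hO' : ∀ j ∉ K, O j = 1) (x y : Fin N → Fin 2) :
    ∑ P : Fin N → Fin 3, ∑ b : Fin N → Fin 2,
      (starRingEnd ℂ) (pvec P b x) * pvec P b y *
        (Matrix.trace (snapshot P b * tensorProd O))^2
    = if x = y then (3:ℂ)^N * 3^k else 0 := by
  classical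
  have step1 : ∀ (P : Fin N → Fin 3) (b : Fin N → Fin 2),
      (starRingEnd ℂ) (pvec P b x) * pvec P b y *
        (Matrix.trace (snapshot P b * tensorProd O))^2
      = ∏ j, ((starRingEnd ℂ) (evec (P j) (b j) (x j)) * evec (P j) (b j) (y j) *
          (((3:ℂ) • outer (evec (P j) (b j)) - 1) * O j).trace ^ 2) := by
    intro P b
    rw [snapshot, trace_tensor_mul, pvec, pvec, map_prod, ← Finset.prod_pow,
      ← Finset.prod_mul_distrib, ← Finset.prod_mul_distrib]
  simp_rw [step1]
  have step2 : ∀ P : Fin N → Fin 3,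
      (∑ b : Fin N → Fin 2, ∏ j, ((starRingEnd ℂ) (evec (P j) (b j) (x j)) * evec (P j) (b j) (y j) *
          (((3:ℂ) • outer (evec (P j) (b j)) - 1) * O j).trace ^ 2))
      = ∏ j, ∑ s : Fin 2, ((starRingEnd ℂ) (evec (P j) s (x j)) * evec (P j) s (y j) *
          (((3:ℂ) • outer (evec (P j) s) - 1) * O j).trace ^ 2) :=
    fun P => (Fintype.prod_sum (f := fun j s => (starRingEnd ℂ) (evec (P j) s (x j)) * evec (P j) s (y j) *
          (((3:ℂ) • outer (evec (P j) s) - 1) * O j).trace ^ 2)).symm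
  simp_rw [step2]
  rw [← Fintype.prod_sum (f := fun (j : Fin N) (p : Fin 3) => ∑ s : Fin 2,
    ((starRingEnd ℂ) (evec p s (x j)) * evec p s (y j) *
      (((3:ℂ) • outer (evec p s) - 1) * O j).trace ^ 2))]
  have hq : ∀ j, (∑ p : Fin 3, ∑ s : Fin 2, ((starRingEnd ℂ) (evec p s (x j)) * evec p s (y j) *
      (((3:ℂ) • outer (evec p s) - 1) * O j).trace ^ 2))
      = if x j = y j then (if j ∈ K then (9:ℂ) else 3) else 0 := by
    intro j
    by_cases hj : j ∈ K
    · rcases hO j hj with h | h | h <;> rw [h, if_pos hj] <;> exact qsum_pauli _ _ _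
    · rw [hO' j hj, if_neg hj]
      exact qsum_one _ _
  rw [Finset.prod_congr rfl (fun j _ => hq j)]
  by_cases hxy : x = y
  · subst hxy
    simp only [eq_self_iff_true, if_true]
    have h3 : ∀ j : Fin N, (if j ∈ K then (9:ℂ) else 3) = 3 * (if j ∈ K then 3 else 1) := by
      intro j; split <;> norm_num
    simp_rw [h3]
    rw [Finset.prod_mul_distrib, Finset.prod_const, Finset.prod_ite_mem, Finset.univ_inter,
      Finset.prod_const, hk, Finset.card_univ, Fintype.card_fin]
  · rw [if_neg hxy]
    have : ∃ j, x j ≠ y j := by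
      by_contra h
      push_neg at h
      exact hxy (funext h)
    obtain ⟨j, hj⟩ := this
    exact Finset.prod_eq_zero (Finset.mem_univ j) (by rw [if_neg hj])

lemma sum_swap4 {α β γ δ : Type*} [Fintype α] [Fintype β] [Fintype γ] [Fintype δ]
    (f : α → β → γ → δ → ℂ) :
    ∑ a, ∑ b, ∑ c, ∑ d, f a b c d = ∑ c, ∑ d, ∑ a, ∑ b, f a b c d := by
  have h1 : ∀ (g : β → γ → δ → ℂ), ∑ b, ∑ c, ∑ d, g b c d = ∑ c, ∑ d, ∑ b, g b c d := by
    intro g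
    rw [Finset.sum_comm]
    exact Finset.sum_congr rfl fun c _ => Finset.sum_comm
  calc ∑ a, ∑ b, ∑ c, ∑ d, f a b c d
      = ∑ a, ∑ c, ∑ d, ∑ b, f a b c d := Finset.sum_congr rfl fun a _ => h1 _
    _ = ∑ c, ∑ a, ∑ d, ∑ b, f a b c d := Finset.sum_comm
    _ = ∑ c, ∑ d, ∑ a, ∑ b, f a b c d := Finset.sum_congr rfl fun c _ => Finset.sum_comm

/-- The second moment of the single-snapshot classical-shadow estimator of a `k`-local Pauli
observable: for `O` a Pauli string acting as `X`, `Y`, or `Z` on a set `K` of `k` qubits and as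
`I₂` elsewhere,
`(1/3^N) · Σ_P Σ_b w_ρ(P,b) · (Tr(S(P,b)·(⊗_j O_j)))² = 3^k · Tr(ρ)`;
for a trace-one state `ρ` this equals exactly `3^k`, the squared shadow norm of a `k`-local
Pauli observable under random Pauli measurements. -/
theorem shadow_second_moment_local_pauli {N : ℕ} (hN : 1 ≤ N)
    (K : Finset (Fin N)) (k : ℕ) (hk : K.card = k)
    (O : Fin N → Matrix (Fin 2) (Fin 2) ℂ)
    (hO : ∀ j ∈ K, O j = pauli 0 ∨ O j = pauli 1 ∨ O j = pauli 2)
    (hO' : ∀ j ∉ K, O j = 1)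
    (ρ : Matrix (Fin N → Fin 2) (Fin N → Fin 2) ℂ) :
    (1 / 3 ^ N : ℂ) * ∑ P : Fin N → Fin 3, ∑ b : Fin N → Fin 2,
      wgt ρ P b * (Matrix.trace (snapshot P b * tensorProd O)) ^ 2
      = 3 ^ k * Matrix.trace ρ := by
  have e1 : ∀ (P : Fin N → Fin 3) (b : Fin N → Fin 2),
      wgt ρ P b * (Matrix.trace (snapshot P b * tensorProd O)) ^ 2
      = ∑ x, ∑ y, ρ x y * ((starRingEnd ℂ) (pvec P b x) * pvec P b y *
          (Matrix.trace (snapshot P b * tensorProd O))^2) := by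
    intro P b
    rw [wgt, Finset.sum_mul]
    refine Finset.sum_congr rfl fun x _ => ?_
    rw [Finset.sum_mul]
    refine Finset.sum_congr rfl fun y _ => ?_
    ring
  simp_rw [e1]
  rw [sum_swap4]
  have e2 : ∀ x y : Fin N → Fin 2, ∑ P : Fin N → Fin 3, ∑ b : Fin N → Fin 2,
      ρ x y * ((starRingEnd ℂ) (pvec P b x) * pvec P b y *
        (Matrix.trace (snapshot P b * tensorProd O))^2)
      = ρ x y * (if x = y then (3:ℂ)^N * 3^k else 0) := by
    intro x y
    simp_rw [← Finset.mul_sum]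
    rw [key K k hk O hO hO' x y]
  simp_rw [e2]
  have e3 : ∀ x : Fin N → Fin 2, ∑ y, ρ x y * (if x = y then (3:ℂ)^N * 3^k else 0)
      = ρ x x * ((3:ℂ)^N * 3^k) := by
    intro x
    simp [mul_ite, mul_zero, Finset.sum_ite_eq]
  simp_rw [e3]
  rw [← Finset.sum_mul]
  have h3N : (3:ℂ)^N ≠ 0 := pow_ne_zero _ (by norm_num)
  rw [Matrix.trace]
  simp only [Matrix.diag]
  field_simp
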